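/- Let k ≥ 2 be an even integer. In the symmetric group on {1, 2, …, 2k−1}, the two k-cycles σ = (1 2 … k) and τ = (k k+1 … 2k−1) generate the full symmetric group, i.e. the subgroup generated by {σ, τ} equals S_{2k−1}. -/

import Mathlib

namespace Stmt0Aux

variable {k : ℕ}

/-- the list `[a, a+1, …, k-1]` inside `Fin (2*k-1)` -/
def lC (k a : ℕ) : List (Fin (2 * k - 1)) := ((List.finRange (2 * k - 1)).take k).drop a

lemma lC_length (hk : 2 ≤ k) (a : ℕ) : (lC k a).length = k - a := by
  simp [lC]; omega

lemma lC_nodup (a : ℕ) : (lC k a).Nodup :=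
  ((List.drop_sublist _ _).trans (List.take_sublist _ _)).nodup (List.nodup_finRange _)

lemma lC_getElem (hk : 2 ≤ k) (a j : ℕ) (h : j < (lC k a).length) :
    (lC k a)[j] = ⟨a + j, by have := lC_length hk (k := k) a; omega⟩ := by
  simp [lC]

lemma lC_not_mem (hk : 2 ≤ k) (a : ℕ) (x : Fin (2 * k - 1))
    (hx : x.val < a ∨ k ≤ x.val) : x ∉ lC k a := by
  intro hmem
  obtain ⟨j, hj, rfl⟩ := List.mem_iff_getElem.mp hmem
  rw [lC_getElem hk a j hj] at hx
  have := lC_length hk (k := k) a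
  simp at hx
  omega

end Stmt0Aux

namespace Stmt0Aux

lemma lC_formPerm_fix (hk : 2 ≤ k) (a : ℕ) (x : Fin (2 * k - 1))
    (hx : x.val < a ∨ k ≤ x.val) : (lC k a).formPerm x = x :=
  List.formPerm_apply_of_notMem (lC_not_mem hk a x hx)

lemma lC_formPerm_apply (hk : 2 ≤ k) (a : ℕ) (x : Fin (2 * k - 1))
    (h1 : a ≤ x.val) (h2 : x.val < k) :
    ((lC k a).formPerm x).val = a + (x.val - a + 1) % (k - a) := by
  have hlen := lC_length hk (k := k) a
  have hj : x.val - a < (lC k a).length := by omega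
  have hx : x = (lC k a)[x.val - a] := by
    rw [lC_getElem hk a _ hj]
    apply Fin.ext; simp; omega
  conv_lhs => rw [hx, List.formPerm_apply_getElem _ (lC_nodup a) _ hj,
    lC_getElem hk a _ (Nat.mod_lt _ (by omega))]
  simp only [hlen]

end Stmt0Aux

namespace Stmt0Aux

lemma take_eq_lC : ((List.finRange (2 * k - 1)).take k) = lC k 0 := List.drop_zero.symm

/-- the list `[k-1, k, …, 2k-2]` -/
def lT (k : ℕ) : List (Fin (2 * k - 1)) := (List.finRange (2 * k - 1)).drop (k - 1)

lemma lT_length (hk : 2 ≤ k) : (lT k).length = k := by simp [lT]; omega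

lemma lT_nodup : (lT k).Nodup := (List.drop_sublist _ _).nodup (List.nodup_finRange _)

lemma lT_getElem (hk : 2 ≤ k) (j : ℕ) (h : j < (lT k).length) :
    (lT k)[j] = ⟨k - 1 + j, by have := lT_length (k := k) hk; omega⟩ := by
  simp [lT]

lemma lT_formPerm_fix (hk : 2 ≤ k) (x : Fin (2 * k - 1))
    (hx : x.val < k - 1) : (lT k).formPerm x = x := by
  apply List.formPerm_apply_of_notMem
  intro hmem
  obtain ⟨j, hj, hjx⟩ := List.mem_iff_getElem.mp hmem
  rw [lT_getElem hk j hj] at hjx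
  rw [← hjx] at hx
  simp at hx

lemma lT_formPerm_apply (hk : 2 ≤ k) (x : Fin (2 * k - 1))
    (h1 : k - 1 ≤ x.val) :
    ((lT k).formPerm x).val = k - 1 + (x.val - (k - 1) + 1) % k := by
  have hlen := lT_length (k := k) hk
  have hxlt : x.val < 2 * k - 1 := x.isLt
  have hj : x.val - (k - 1) < (lT k).length := by omega
  have hx : x = (lT k)[x.val - (k - 1)] := by
    rw [lT_getElem hk _ hj]
    apply Fin.ext; simp; omega
  conv_lhs => rw [hx, List.formPerm_apply_getElem _ lT_nodup _ hj,
    lT_getElem hk _ (Nat.mod_lt _ (by have := lT_length (k:=k) hk; omega))]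
  simp only [lT_length (k:=k) hk]


end Stmt0Aux

namespace Stmt0Aux

/-- the full rotation -/
def rho (k : ℕ) : Equiv.Perm (Fin (2 * k - 1)) := (List.finRange (2 * k - 1)).formPerm

lemma rho_pow_apply (hk : 2 ≤ k) (m : ℕ) (x : Fin (2 * k - 1)) :
    ((rho k ^ m) x).val = (x.val + m) % (2 * k - 1) := by
  have hxlt : x.val < 2 * k - 1 := x.isLt
  have hj : x.val < (List.finRange (2 * k - 1)).length := by simpa using hxlt
  have hx : x = (List.finRange (2 * k - 1))[x.val] := by simp
  conv_lhs => rw [hx, rho, List.formPerm_pow_apply_getElem _ (List.nodup_finRange _) m _ hj]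
  simp

lemma rho_apply (hk : 2 ≤ k) (x : Fin (2 * k - 1)) :
    ((rho k) x).val = (x.val + 1) % (2 * k - 1) := by
  have := rho_pow_apply hk 1 x
  rwa [pow_one] at this

end Stmt0Aux

namespace Stmt0Aux

lemma sigma_tau_eq_rho (hk : 2 ≤ k) :
    (lC k 0).formPerm * (lT k).formPerm = rho k := by
  have hn : 2 < 2 * k - 1 ∨ k = 2 := by omega
  ext x
  rw [Equiv.Perm.mul_apply]
  rw [rho_apply hk]
  have hxlt : x.val < 2 * k - 1 := x.isLt
  rcases lt_or_ge x.val (k-1) with h | h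
  · rw [lT_formPerm_fix hk x h, lC_formPerm_apply hk 0 x (Nat.zero_le _) (by omega)]
    simp only [Nat.sub_zero, Nat.zero_add]
    rw [Nat.mod_eq_of_lt (by omega), Nat.mod_eq_of_lt (by omega)]
  · have ht := lT_formPerm_apply hk x h
    rcases lt_or_ge x.val (2*k-2) with h2 | h2
    · rw [Nat.mod_eq_of_lt (by omega)] at ht
      rw [lC_formPerm_fix hk 0 ((lT k).formPerm x) (Or.inr (by omega)), ht,
        Nat.mod_eq_of_lt (by omega)]
      omega
    · have hx2 : x.val = 2*k-2 := by omega
      rw [hx2] at ht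
      rw [show 2*k-2-(k-1)+1 = k by omega, Nat.mod_self] at ht
      rw [lC_formPerm_apply hk 0 ((lT k).formPerm x) (Nat.zero_le _) (by omega)]
      simp only [Nat.sub_zero, Nat.zero_add]
      rw [ht, hx2]
      rw [show k - 1 + 0 + 1 = k by omega, Nat.mod_self, show 2*k-2+1 = 2*k-1 by omega,
        Nat.mod_self]

end Stmt0Aux

namespace Stmt0Aux

open Equiv

/-- the 3-cycle `(a, a+1, a+2)` -/
def wsw (k a : ℕ) : Equiv.Perm (Fin (2 * k - 1)) :=
  if h : a + 2 < 2 * k - 1 then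
    Equiv.swap ⟨a, by omega⟩ ⟨a + 1, by omega⟩ * Equiv.swap ⟨a + 1, by omega⟩ ⟨a + 2, by omega⟩
  else 1

lemma wsw_apply (a : ℕ) (h : a + 2 < 2 * k - 1) (x : Fin (2 * k - 1)) :
    ((wsw k a) x).val =
      if x.val = a then a + 1 else if x.val = a + 1 then a + 2
        else if x.val = a + 2 then a else x.val := by
  simp only [wsw, dif_pos h, Equiv.Perm.mul_apply, Equiv.swap_apply_def, Fin.ext_iff,
    apply_ite Fin.val, Fin.val_mk]
  split_ifs <;> omega

end Stmt0Aux

namespace Stmt0Aux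

lemma wsw_inv_apply (a : ℕ) (h : a + 2 < 2 * k - 1) (x : Fin (2 * k - 1)) :
    (((wsw k a)⁻¹) x).val =
      if x.val = a + 1 then a else if x.val = a + 2 then a + 1
        else if x.val = a then a + 2 else x.val := by
  simp only [wsw, dif_pos h, mul_inv_rev, Equiv.Perm.mul_apply, Equiv.swap_inv,
    Equiv.swap_apply_def, Fin.ext_iff, apply_ite Fin.val, Fin.val_mk]
  split_ifs <;> omega

attribute [irreducible] wsw lC lT rho

lemma key_identity (hk : 2 ≤ k) :
    (lC k 0).formPerm * (wsw k (k - 2))⁻¹ * (lT k).formPerm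
      = (lT k).formPerm * (lC k 0).formPerm := by
  have hlt : (k - 2) + 2 < 2 * k - 1 := by omega
  ext x
  simp only [Equiv.Perm.mul_apply]
  have hxlt : x.val < 2 * k - 1 := x.isLt
  rcases lt_or_ge x.val (k - 2) with h1 | h1
  · -- x < k-2
    have hx1 : x.val + 1 < 2 * k - 1 := by omega
    have e1 : (lT k).formPerm x = x := lT_formPerm_fix hk x (by omega)
    have e2 : ((wsw k (k - 2))⁻¹) x = x := by
      apply Fin.ext
      rw [wsw_inv_apply _ hlt]
      have h5 : ¬ (x.val = k - 2 + 1) := by omega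
      have h6 : ¬ (x.val = k - 2 + 2) := by omega
      have h7 : ¬ (x.val = k - 2) := by omega
      simp only [if_neg h5, if_neg h6, if_neg h7]
    have e3 : (lC k 0).formPerm x = ⟨x.val + 1, hx1⟩ := by
      apply Fin.ext
      rw [lC_formPerm_apply hk 0 x (Nat.zero_le _) (show x.val < k from by omega)]
      simp only [Nat.sub_zero, Nat.zero_add, Fin.val_mk]
      rw [Nat.mod_eq_of_lt (show x.val + 1 < k from by omega)]
    have e4 : (lT k).formPerm (⟨x.val + 1, hx1⟩ : Fin (2 * k - 1)) = ⟨x.val + 1, hx1⟩ :=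
      lT_formPerm_fix hk ⟨x.val + 1, hx1⟩ (show x.val + 1 < k - 1 from by omega)
    rw [e1, e2, e3, e4]
  rcases eq_or_lt_of_le h1 with h2 | h2
  · -- x = k-2
    have hx : x.val = k - 2 := h2.symm
    have hk1 : k - 1 < 2 * k - 1 := by omega
    have hkk : k < 2 * k - 1 := by omega
    have e1 : (lT k).formPerm x = x := lT_formPerm_fix hk x (by omega)
    have e2 : ((wsw k (k - 2))⁻¹) x = ⟨k, hkk⟩ := by
      apply Fin.ext
      rw [wsw_inv_apply _ hlt]
      have h5 : ¬ (x.val = k - 2 + 1) := by omega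
      have h6 : ¬ (x.val = k - 2 + 2) := by omega
      simp only [if_neg h5, if_neg h6, if_pos hx, Fin.val_mk]
      omega
    have e3 : (lC k 0).formPerm x = ⟨k - 1, hk1⟩ := by
      apply Fin.ext
      rw [lC_formPerm_apply hk 0 x (Nat.zero_le _) (show x.val < k from by omega)]
      simp only [Nat.sub_zero, Nat.zero_add, Fin.val_mk]
      rw [hx, show k - 2 + 1 = k - 1 from by omega,
        Nat.mod_eq_of_lt (show k - 1 < k from by omega)]
    have e4 : (lC k 0).formPerm (⟨k, hkk⟩ : Fin (2 * k - 1)) = ⟨k, hkk⟩ :=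
      lC_formPerm_fix hk 0 ⟨k, hkk⟩ (Or.inr (le_refl k))
    have e5 : ((lT k).formPerm (⟨k - 1, hk1⟩ : Fin (2 * k - 1))).val = k := by
      rw [lT_formPerm_apply hk ⟨k - 1, hk1⟩ (le_refl (k - 1))]
      simp only [Fin.val_mk]
      rw [show k - 1 - (k - 1) + 1 = 1 from by omega,
        Nat.mod_eq_of_lt (show 1 < k from by omega)]
      omega
    rw [e1, e2, e4, e3, e5]
  rcases eq_or_ne x.val (k - 1) with h3 | h3
  · -- x = k-1
    have hk1 : k - 1 < 2 * k - 1 := by omega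
    have hkk : k < 2 * k - 1 := by omega
    have h0 : 0 < 2 * k - 1 := by omega
    have e1 : (lT k).formPerm x = ⟨k, hkk⟩ := by
      apply Fin.ext
      rw [lT_formPerm_apply hk x (show k - 1 ≤ x.val from by omega)]
      simp only [Fin.val_mk]
      rw [h3, show k - 1 - (k - 1) + 1 = 1 from by omega,
        Nat.mod_eq_of_lt (show 1 < k from by omega)]
      omega
    have e2 : ((wsw k (k - 2))⁻¹) (⟨k, hkk⟩ : Fin (2 * k - 1)) = ⟨k - 1, hk1⟩ := by
      apply Fin.ext
      rw [wsw_inv_apply _ hlt]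
      have h5 : ¬ (k = k - 2 + 1) := by omega
      have h6 : k = k - 2 + 2 := by omega
      simp only [Fin.val_mk, if_neg h5, if_pos h6]
      omega
    have e3 : (lC k 0).formPerm x = ⟨0, h0⟩ := by
      apply Fin.ext
      rw [lC_formPerm_apply hk 0 x (Nat.zero_le _) (show x.val < k from by omega)]
      simp only [Nat.sub_zero, Nat.zero_add, Fin.val_mk]
      rw [h3, show k - 1 + 1 = k from by omega, Nat.mod_self]
    have e4 : ((lC k 0).formPerm (⟨k - 1, hk1⟩ : Fin (2 * k - 1))).val = 0 := by
      rw [lC_formPerm_apply hk 0 ⟨k - 1, hk1⟩ (Nat.zero_le _) (show k - 1 < k from by omega)]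
      simp only [Nat.sub_zero, Nat.zero_add, Fin.val_mk]
      rw [show k - 1 + 1 = k from by omega, Nat.mod_self]
    have e5 : (lT k).formPerm (⟨0, h0⟩ : Fin (2 * k - 1)) = ⟨0, h0⟩ :=
      lT_formPerm_fix hk ⟨0, h0⟩ (show 0 < k - 1 from by omega)
    rw [e1, e2, e3, e5, e4]
  rcases lt_or_ge x.val (2 * k - 2) with h4 | h4
  · -- k ≤ x < 2k-2
    have hx1 : x.val + 1 < 2 * k - 1 := by omega
    have e1 : (lT k).formPerm x = ⟨x.val + 1, hx1⟩ := by
      apply Fin.ext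
      rw [lT_formPerm_apply hk x (show k - 1 ≤ x.val from by omega)]
      simp only [Fin.val_mk]
      rw [Nat.mod_eq_of_lt (show x.val - (k - 1) + 1 < k from by omega)]
      omega
    have e2 : ((wsw k (k - 2))⁻¹) (⟨x.val + 1, hx1⟩ : Fin (2 * k - 1))
        = ⟨x.val + 1, hx1⟩ := by
      apply Fin.ext
      rw [wsw_inv_apply _ hlt]
      have h5 : ¬ (x.val + 1 = k - 2 + 1) := by omega
      have h6 : ¬ (x.val + 1 = k - 2 + 2) := by omega
      have h7 : ¬ (x.val + 1 = k - 2) := by omega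
      simp only [Fin.val_mk, if_neg h5, if_neg h6, if_neg h7]
    have e3 : (lC k 0).formPerm (⟨x.val + 1, hx1⟩ : Fin (2 * k - 1))
        = ⟨x.val + 1, hx1⟩ :=
      lC_formPerm_fix hk 0 ⟨x.val + 1, hx1⟩ (Or.inr (show k ≤ x.val + 1 from by omega))
    have e4 : (lC k 0).formPerm x = x := lC_formPerm_fix hk 0 x (Or.inr (by omega))
    rw [e1, e2, e3, e4, e1]
  · -- x = 2k-2
    have hx : x.val = 2 * k - 2 := by omega
    have hk1 : k - 1 < 2 * k - 1 := by omega
    have hk2 : k - 2 < 2 * k - 1 := by omega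
    have e1 : (lT k).formPerm x = ⟨k - 1, hk1⟩ := by
      apply Fin.ext
      rw [lT_formPerm_apply hk x (show k - 1 ≤ x.val from by omega)]
      simp only [Fin.val_mk]
      rw [hx, show 2 * k - 2 - (k - 1) + 1 = k from by omega, Nat.mod_self]
      omega
    have e2 : ((wsw k (k - 2))⁻¹) (⟨k - 1, hk1⟩ : Fin (2 * k - 1))
        = ⟨k - 2, hk2⟩ := by
      apply Fin.ext
      rw [wsw_inv_apply _ hlt]
      have h5 : k - 1 = k - 2 + 1 := by omega
      simp only [Fin.val_mk, if_pos h5]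
    have e3 : ((lC k 0).formPerm (⟨k - 2, hk2⟩ : Fin (2 * k - 1))).val = k - 1 := by
      rw [lC_formPerm_apply hk 0 ⟨k - 2, hk2⟩ (Nat.zero_le _) (show k - 2 < k from by omega)]
      simp only [Nat.sub_zero, Nat.zero_add, Fin.val_mk]
      rw [show k - 2 + 1 = k - 1 from by omega,
        Nat.mod_eq_of_lt (show k - 1 < k from by omega)]
    have e4 : (lC k 0).formPerm x = x := lC_formPerm_fix hk 0 x (Or.inr (by omega))
    rw [e1, e2, e4, e1, e3]

end Stmt0Aux

namespace Stmt0Aux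

lemma mod_helper (k A B : ℕ) (h : A = B + (2 * k - 1)) (hB : B < 2 * k - 1) :
    A % (2 * k - 1) = B := by
  subst h
  rw [Nat.add_mod_right, Nat.mod_eq_of_lt hB]

set_option maxHeartbeats 1000000 in
lemma conj_w (hk : 2 ≤ k) (a : ℕ) (ha : a + 4 ≤ k) :
    rho k ^ (a + k + 1) * wsw k (k - 2) = wsw k a * rho k ^ (a + k + 1) := by
  have hlt : (k - 2) + 2 < 2 * k - 1 := by omega
  have halt : a + 2 < 2 * k - 1 := by omega
  ext x
  simp only [Equiv.Perm.mul_apply]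
  have hxlt : x.val < 2 * k - 1 := x.isLt
  rcases eq_or_ne x.val (k - 2) with h1 | h1
  · have e1 : wsw k (k - 2) x = ⟨k - 1, by omega⟩ := by
      apply Fin.ext
      rw [wsw_apply _ hlt]
      simp only [if_pos h1, Fin.val_mk]
      omega
    have e2 : (rho k ^ (a + k + 1)) x = ⟨a, by omega⟩ := by
      apply Fin.ext
      rw [rho_pow_apply hk]
      simp only [Fin.val_mk]
      exact mod_helper k _ a (by omega) (by omega)
    have e3 : ((rho k ^ (a + k + 1)) (⟨k - 1, by omega⟩ : Fin (2 * k - 1))).val = a + 1 := by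
      rw [rho_pow_apply hk]
      simp only [Fin.val_mk]
      exact mod_helper k _ (a + 1) (by omega) (by omega)
    have e4 : ((wsw k a) (⟨a, by omega⟩ : Fin (2 * k - 1))).val = a + 1 := by
      rw [wsw_apply _ halt]
      simp only [Fin.val_mk, if_pos rfl, if_true]
    rw [e1, e2, e3, e4]
  rcases eq_or_ne x.val (k - 1) with h2 | h2
  · have e1 : wsw k (k - 2) x = ⟨k, by omega⟩ := by
      apply Fin.ext
      rw [wsw_apply _ hlt]
      have h5 : ¬ (x.val = k - 2) := by omega
      have h6 : x.val = k - 2 + 1 := by omega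
      simp only [if_neg h5, if_pos h6, Fin.val_mk]
      omega
    have e2 : (rho k ^ (a + k + 1)) x = ⟨a + 1, by omega⟩ := by
      apply Fin.ext
      rw [rho_pow_apply hk]
      simp only [Fin.val_mk]
      exact mod_helper k _ (a + 1) (by omega) (by omega)
    have e3 : ((rho k ^ (a + k + 1)) (⟨k, by omega⟩ : Fin (2 * k - 1))).val = a + 2 := by
      rw [rho_pow_apply hk]
      simp only [Fin.val_mk]
      exact mod_helper k _ (a + 2) (by omega) (by omega)
    have e4 : ((wsw k a) (⟨a + 1, by omega⟩ : Fin (2 * k - 1))).val = a + 2 := by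
      rw [wsw_apply _ halt]
      have h5 : ¬ (a + 1 = a) := by omega
      simp only [Fin.val_mk, if_neg h5, if_pos rfl, if_true]
    rw [e1, e2, e3, e4]
  rcases eq_or_ne x.val k with h3 | h3
  · have e1 : wsw k (k - 2) x = ⟨k - 2, by omega⟩ := by
      apply Fin.ext
      rw [wsw_apply _ hlt]
      have h5 : ¬ (x.val = k - 2) := by omega
      have h6 : ¬ (x.val = k - 2 + 1) := by omega
      have h7 : x.val = k - 2 + 2 := by omega
      simp only [if_neg h5, if_neg h6, if_pos h7, Fin.val_mk]
    have e2 : (rho k ^ (a + k + 1)) x = ⟨a + 2, by omega⟩ := by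
      apply Fin.ext
      rw [rho_pow_apply hk]
      simp only [Fin.val_mk]
      exact mod_helper k _ (a + 2) (by omega) (by omega)
    have e3 : ((rho k ^ (a + k + 1)) (⟨k - 2, by omega⟩ : Fin (2 * k - 1))).val = a := by
      rw [rho_pow_apply hk]
      simp only [Fin.val_mk]
      exact mod_helper k _ a (by omega) (by omega)
    have e4 : ((wsw k a) (⟨a + 2, by omega⟩ : Fin (2 * k - 1))).val = a := by
      rw [wsw_apply _ halt]
      have h5 : ¬ (a + 2 = a) := by omega
      have h6 : ¬ (a + 2 = a + 1) := by omega
      simp only [Fin.val_mk, if_neg h5, if_neg h6, if_pos rfl, if_true]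
    rw [e1, e2, e3, e4]
  · -- x fixed by wsw k (k-2)
    have e1 : wsw k (k - 2) x = x := by
      apply Fin.ext
      rw [wsw_apply _ hlt]
      have h5 : ¬ (x.val = k - 2) := h1
      have h6 : ¬ (x.val = k - 2 + 1) := by omega
      have h7 : ¬ (x.val = k - 2 + 2) := by omega
      simp only [if_neg h5, if_neg h6, if_neg h7]
    have hv : ((rho k ^ (a + k + 1)) x).val = (x.val + (a + k + 1)) % (2 * k - 1) :=
      rho_pow_apply hk _ x
    rcases lt_or_ge (x.val + (a + k + 1)) (2 * k - 1) with hc | hc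
    · have hv' : ((rho k ^ (a + k + 1)) x).val = x.val + (a + k + 1) := by
        rw [hv, Nat.mod_eq_of_lt hc]
      have e4 : ((wsw k a) ((rho k ^ (a + k + 1)) x)).val = ((rho k ^ (a + k + 1)) x).val := by
        rw [wsw_apply _ halt]
        have h5 : ¬ (((rho k ^ (a + k + 1)) x).val = a) := by omega
        have h6 : ¬ (((rho k ^ (a + k + 1)) x).val = a + 1) := by omega
        have h7 : ¬ (((rho k ^ (a + k + 1)) x).val = a + 2) := by omega
        simp only [if_neg h5, if_neg h6, if_neg h7]
      rw [e1, e4]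
    · have hv' : ((rho k ^ (a + k + 1)) x).val = x.val + (a + k + 1) - (2 * k - 1) := by
        rw [hv]
        exact mod_helper k _ _ (by omega) (by omega)
      have e4 : ((wsw k a) ((rho k ^ (a + k + 1)) x)).val = ((rho k ^ (a + k + 1)) x).val := by
        rw [wsw_apply _ halt]
        have h5 : ¬ (((rho k ^ (a + k + 1)) x).val = a) := by omega
        have h6 : ¬ (((rho k ^ (a + k + 1)) x).val = a + 1) := by omega
        have h7 : ¬ (((rho k ^ (a + k + 1)) x).val = a + 2) := by omega
        simp only [if_neg h5, if_neg h6, if_neg h7]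
      rw [e1, e4]

end Stmt0Aux

namespace Stmt0Aux

set_option maxHeartbeats 1000000 in
lemma step_identity (hk : 2 ≤ k) (a : ℕ) (ha : a + 4 ≤ k) :
    (lC k a).formPerm = wsw k a * (lC k (a + 2)).formPerm := by
  have halt : a + 2 < 2 * k - 1 := by omega
  ext x
  simp only [Equiv.Perm.mul_apply]
  have hxlt : x.val < 2 * k - 1 := x.isLt
  rcases lt_or_ge x.val a with h1 | h1
  · -- x < a
    have e1 : (lC k a).formPerm x = x := lC_formPerm_fix hk a x (Or.inl h1)
    have e2 : (lC k (a + 2)).formPerm x = x := lC_formPerm_fix hk (a + 2) x (Or.inl (by omega))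
    have e3 : ((wsw k a) x).val = x.val := by
      rw [wsw_apply _ halt]
      have h5 : ¬ (x.val = a) := by omega
      have h6 : ¬ (x.val = a + 1) := by omega
      have h7 : ¬ (x.val = a + 2) := by omega
      simp only [if_neg h5, if_neg h6, if_neg h7]
    rw [e1, e2, e3]
  rcases le_or_gt k x.val with h2 | h2
  · -- x ≥ k
    have e1 : (lC k a).formPerm x = x := lC_formPerm_fix hk a x (Or.inr h2)
    have e2 : (lC k (a + 2)).formPerm x = x := lC_formPerm_fix hk (a + 2) x (Or.inr h2)
    have e3 : ((wsw k a) x).val = x.val := by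
      rw [wsw_apply _ halt]
      have h5 : ¬ (x.val = a) := by omega
      have h6 : ¬ (x.val = a + 1) := by omega
      have h7 : ¬ (x.val = a + 2) := by omega
      simp only [if_neg h5, if_neg h6, if_neg h7]
    rw [e1, e2, e3]
  rcases eq_or_ne x.val a with h3 | h3
  · -- x = a
    have e1 : ((lC k a).formPerm x).val = a + 1 := by
      rw [lC_formPerm_apply hk a x h1 h2, h3]
      rw [show a - a + 1 = 1 from by omega, Nat.mod_eq_of_lt (show 1 < k - a from by omega)]
    have e2 : (lC k (a + 2)).formPerm x = x := lC_formPerm_fix hk (a + 2) x (Or.inl (by omega))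
    have e3 : ((wsw k a) x).val = a + 1 := by
      rw [wsw_apply _ halt]
      simp only [if_pos h3]
    rw [e2, e3, e1]
  rcases eq_or_ne x.val (a + 1) with h4 | h4
  · -- x = a+1
    have e1 : ((lC k a).formPerm x).val = a + 2 := by
      rw [lC_formPerm_apply hk a x h1 h2, h4]
      rw [show a + 1 - a + 1 = 2 from by omega, Nat.mod_eq_of_lt (show 2 < k - a from by omega)]
    have e2 : (lC k (a + 2)).formPerm x = x := lC_formPerm_fix hk (a + 2) x (Or.inl (by omega))
    have e3 : ((wsw k a) x).val = a + 2 := by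
      rw [wsw_apply _ halt]
      have h5 : ¬ (x.val = a) := by omega
      simp only [if_neg h5, if_pos h4]
    rw [e2, e3, e1]
  rcases lt_or_ge x.val (k - 1) with h5 | h5
  · -- a+2 ≤ x < k-1
    have hx1 : x.val + 1 < 2 * k - 1 := by omega
    have e1 : ((lC k a).formPerm x).val = x.val + 1 := by
      rw [lC_formPerm_apply hk a x h1 h2]
      rw [Nat.mod_eq_of_lt (show x.val - a + 1 < k - a from by omega)]
      omega
    have e2 : (lC k (a + 2)).formPerm x = ⟨x.val + 1, hx1⟩ := by
      apply Fin.ext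
      rw [lC_formPerm_apply hk (a + 2) x (by omega) h2]
      simp only [Fin.val_mk]
      rw [Nat.mod_eq_of_lt (show x.val - (a + 2) + 1 < k - (a + 2) from by omega)]
      omega
    have e3 : ((wsw k a) (⟨x.val + 1, hx1⟩ : Fin (2 * k - 1))).val = x.val + 1 := by
      rw [wsw_apply _ halt]
      have h6 : ¬ (x.val + 1 = a) := by omega
      have h7 : ¬ (x.val + 1 = a + 1) := by omega
      have h8 : ¬ (x.val + 1 = a + 2) := by omega
      simp only [Fin.val_mk, if_neg h6, if_neg h7, if_neg h8]
    rw [e2, e3, e1]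
  · -- x = k-1
    have hx : x.val = k - 1 := by omega
    have e1 : ((lC k a).formPerm x).val = a := by
      rw [lC_formPerm_apply hk a x h1 h2, hx]
      rw [show k - 1 - a + 1 = k - a from by omega, Nat.mod_self]
      omega
    have e2 : (lC k (a + 2)).formPerm x = ⟨a + 2, by omega⟩ := by
      apply Fin.ext
      rw [lC_formPerm_apply hk (a + 2) x (by omega) h2]
      simp only [Fin.val_mk]
      rw [hx, show k - 1 - (a + 2) + 1 = k - (a + 2) from by omega, Nat.mod_self]
    have e3 : ((wsw k a) (⟨a + 2, by omega⟩ : Fin (2 * k - 1))).val = a := by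
      rw [wsw_apply _ halt]
      have h6 : ¬ (a + 2 = a) := by omega
      have h7 : ¬ (a + 2 = a + 1) := by omega
      simp only [Fin.val_mk, if_neg h6, if_neg h7, if_pos rfl, if_true]
    rw [e2, e3, e1]

lemma last_step (hk : 2 ≤ k) :
    (lC k (k - 2)).formPerm
      = Equiv.swap (⟨k - 2, by omega⟩ : Fin (2 * k - 1)) ⟨k - 1, by omega⟩ := by
  have hlist : lC k (k - 2) = [⟨k - 2, by omega⟩, ⟨k - 1, by omega⟩] := by
    apply List.ext_getElem
    · rw [lC_length hk]
      simp
      omega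
    · intro i h1 h2
      rw [lC_getElem hk _ i h1]
      simp at h2
      interval_cases i <;> simp <;> omega
  rw [hlist, List.formPerm_pair]

end Stmt0Aux

namespace Stmt0Aux

lemma rho_isCycle (hk : 2 ≤ k) : (rho k).IsCycle := by
  rw [show rho k = (List.finRange (2 * k - 1)).formPerm from by rw [rho]]
  exact List.isCycle_formPerm (List.nodup_finRange _) (by simp; omega)

lemma rho_support (hk : 2 ≤ k) : (rho k).support = Finset.univ := by
  rw [show rho k = (List.finRange (2 * k - 1)).formPerm from by rw [rho]]
  rw [List.support_formPerm_of_nodup _ (List.nodup_finRange _)]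
  · apply Finset.ext
    intro x
    simp [List.mem_toFinset, List.mem_finRange]
  · intro y hy
    have h1 : (List.finRange (2 * k - 1)).length = 1 := by rw [hy]; simp
    simp at h1
    omega

end Stmt0Aux

/-- For even `k ≥ 2`, the two `k`-cycles `σ = (1 2 … k)` and
`τ = (k k+1 … 2k−1)` generate the full symmetric group `S_{2k−1}`.
Here we work with `Equiv.Perm (Fin (2*k-1))` (0-indexed, so `σ` is the cycle on
indices `0,…,k-1` and `τ` the cycle on indices `k-1,…,2k-2`). -/
theorem stmt_0 (k : ℕ) (hk : 2 ≤ k) (hkeven : Even k)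
    (σ τ : Equiv.Perm (Fin (2 * k - 1)))
    (hσ : σ = ((List.finRange (2 * k - 1)).take k).formPerm)
    (hτ : τ = ((List.finRange (2 * k - 1)).drop (k - 1)).formPerm) :
    Subgroup.closure {σ, τ} = (⊤ : Subgroup (Equiv.Perm (Fin (2 * k - 1)))) := by
  rw [Stmt0Aux.take_eq_lC] at hσ
  rw [show (List.finRange (2 * k - 1)).drop (k - 1) = Stmt0Aux.lT k from by rw [Stmt0Aux.lT]] at hτ
  set H := Subgroup.closure {σ, τ} with hH
  have hσH : (Stmt0Aux.lC k 0).formPerm ∈ H := hσ ▸ Subgroup.subset_closure (Set.mem_insert _ _)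
  have hτH : (Stmt0Aux.lT k).formPerm ∈ H :=
    hτ ▸ Subgroup.subset_closure (Set.mem_insert_of_mem _ rfl)
  have hρH : Stmt0Aux.rho k ∈ H := by
    rw [← Stmt0Aux.sigma_tau_eq_rho hk]
    exact mul_mem hσH hτH
  -- the 3-cycle (k-2, k-1, k)
  have hwk2 : Stmt0Aux.wsw k (k - 2) ∈ H := by
    have hw := Stmt0Aux.key_identity (k := k) hk
    have h2 : (Stmt0Aux.wsw k (k - 2))⁻¹ =
        ((Stmt0Aux.lC k 0).formPerm)⁻¹ * ((Stmt0Aux.lT k).formPerm * (Stmt0Aux.lC k 0).formPerm) * ((Stmt0Aux.lT k).formPerm)⁻¹ := by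
      rw [← hw]; group
    have h3 : (Stmt0Aux.wsw k (k - 2))⁻¹ ∈ H := by
      rw [h2]
      exact mul_mem (mul_mem (inv_mem hσH) (mul_mem hτH hσH)) (inv_mem hτH)
    simpa using inv_mem h3
  -- all needed 3-cycles
  have hwa : ∀ a : ℕ, a + 4 ≤ k → Stmt0Aux.wsw k a ∈ H := by
    intro a ha
    have hc := Stmt0Aux.conj_w hk a ha
    have h2 : Stmt0Aux.wsw k a = Stmt0Aux.rho k ^ (a + k + 1) * Stmt0Aux.wsw k (k - 2) * (Stmt0Aux.rho k ^ (a + k + 1))⁻¹ := by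
      rw [mul_assoc]
      rw [show Stmt0Aux.wsw k (k - 2) * (Stmt0Aux.rho k ^ (a + k + 1))⁻¹
          = (Stmt0Aux.rho k ^ (a + k + 1))⁻¹ * (Stmt0Aux.wsw k a * Stmt0Aux.rho k ^ (a + k + 1)) * (Stmt0Aux.rho k ^ (a + k + 1))⁻¹
          from by rw [← hc]; group]
      group
    rw [h2]
    exact mul_mem (mul_mem (pow_mem hρH _) hwk2) (inv_mem (pow_mem hρH _))
  -- descent
  have hdescent : ∀ j : ℕ, 2 * j ≤ k - 2 → (Stmt0Aux.lC k (2 * j)).formPerm ∈ H := by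
    intro j
    induction j with
    | zero => intro _; simpa using hσH
    | succ j ih =>
      intro hj
      have hj' : 2 * j ≤ k - 2 := by omega
      have ha : 2 * j + 4 ≤ k := by omega
      have hstep := Stmt0Aux.step_identity hk (2 * j) ha
      have h2 : (Stmt0Aux.lC k (2 * j + 2)).formPerm = (Stmt0Aux.wsw k (2 * j))⁻¹ * (Stmt0Aux.lC k (2 * j)).formPerm := by
        rw [hstep]; group
      rw [show 2 * (j + 1) = 2 * j + 2 from by ring, h2]
      exact mul_mem (inv_mem (hwa _ ha)) (ih hj')
  -- the adjacent swap
  have hswap : Equiv.swap (⟨k - 2, by omega⟩ : Fin (2 * k - 1)) ⟨k - 1, by omega⟩ ∈ H := by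
    obtain ⟨c, hc⟩ := hkeven
    have hc1 : 1 ≤ c := by omega
    have := hdescent (c - 1) (by omega)
    rw [show 2 * (c - 1) = k - 2 from by omega] at this
    rwa [Stmt0Aux.last_step hk] at this
  -- conclude
  have h1 := Stmt0Aux.rho_isCycle (k := k) hk
  have h2 := Stmt0Aux.rho_support (k := k) hk
  have hrv : (Stmt0Aux.rho k) (⟨k - 2, by omega⟩ : Fin (2 * k - 1)) = ⟨k - 1, by omega⟩ := by
    apply Fin.ext
    rw [Stmt0Aux.rho_apply hk]
    simp only [Fin.val_mk]
    rw [show k - 2 + 1 = k - 1 from by omega,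
      Nat.mod_eq_of_lt (show k - 1 < 2 * k - 1 from by omega)]
  have hcl := Equiv.Perm.closure_cycle_adjacent_swap h1 h2 (⟨k - 2, by omega⟩ : Fin (2 * k - 1))
  rw [hrv] at hcl
  rw [eq_top_iff, ← hcl]
  apply (Subgroup.closure_le H).mpr
  intro g hg
  rcases hg with hg | hg
  · exact hg ▸ hρH
  · simp only [Set.mem_singleton_iff] at hg
    exact hg ▸ hswap
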